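/- For every quantum channel C from a finite-dimensional system A to a finite-dimensional system B and every error tolerance ε ≥ 0, the one-shot classical simulation cost assisted by free general supermaps equals the one assisted by free parallel supermaps: S_ε^Free(C) = S_ε^FreePar(C). -/

import Mathlib

/-!
STATEMENT 18: For every quantum channel C and every error tolerance ε ≥ 0, the one-shot
classical simulation cost assisted by free general supermaps equals the one assisted by
free parallel supermaps: S_ε^Free(C) = S_ε^FreePar(C).
-/

open Matrix
open scoped Classical ComplexOrder

namespace ICO

section Toolkit

variable {N : ℕ} {κX κY : Fin N → Type}
  [∀ j, Fintype (κX j)] [∀ j, DecidableEq (κX j)]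
  [∀ j, Fintype (κY j)] [∀ j, DecidableEq (κY j)]
  {R : Type} [Fintype R]

/-- Smoothing over the factor `Y j` (with spectator `R`). -/
noncomputable def floorY (j : Fin N)
    (P : Matrix (((∀ i, κX i) × (∀ i, κY i)) × R) (((∀ i, κX i) × (∀ i, κY i)) × R) ℂ) :
    Matrix (((∀ i, κX i) × (∀ i, κY i)) × R) (((∀ i, κX i) × (∀ i, κY i)) × R) ℂ :=
  Matrix.of fun p q =>
    if p.1.2 j = q.1.2 j then
      (Fintype.card (κY j) : ℂ)⁻¹ *
        ∑ c : κY j, P ((p.1.1, Function.update p.1.2 j c), p.2)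
          ((q.1.1, Function.update q.1.2 j c), q.2)
    else 0

/-- Smoothing over the factors `X j ⊗ Y j` (with spectator `R`). -/
noncomputable def floorXY (j : Fin N)
    (P : Matrix (((∀ i, κX i) × (∀ i, κY i)) × R) (((∀ i, κX i) × (∀ i, κY i)) × R) ℂ) :
    Matrix (((∀ i, κX i) × (∀ i, κY i)) × R) (((∀ i, κX i) × (∀ i, κY i)) × R) ℂ :=
  Matrix.of fun p q =>
    if p.1.1 j = q.1.1 j ∧ p.1.2 j = q.1.2 j then
      ((Fintype.card (κX j) : ℂ) * (Fintype.card (κY j) : ℂ))⁻¹ *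
        ∑ a : κX j, ∑ c : κY j,
          P ((Function.update p.1.1 j a, Function.update p.1.2 j c), p.2)
            ((Function.update q.1.1 j a, Function.update q.1.2 j c), q.2)
    else 0

/-- `L^NS_{XY} := L^NS_{X₁Y₁} ∘ ⋯ ∘ L^NS_{X_NY_N}` (with spectator `R`). -/
noncomputable def LNS
    (P : Matrix (((∀ i, κX i) × (∀ i, κY i)) × R) (((∀ i, κX i) × (∀ i, κY i)) × R) ℂ) :
    Matrix (((∀ i, κX i) × (∀ i, κY i)) × R) (((∀ i, κX i) × (∀ i, κY i)) × R) ℂ :=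
  (List.finRange N).foldr (fun j Q => Q - floorY j Q + floorXY j Q) P

/-- Smoothing over the whole factor `Y = Y₁⊗⋯⊗Y_N` (with spectator `R`). -/
noncomputable def floorYall
    (P : Matrix (((∀ i, κX i) × (∀ i, κY i)) × R) (((∀ i, κX i) × (∀ i, κY i)) × R) ℂ) :
    Matrix (((∀ i, κX i) × (∀ i, κY i)) × R) (((∀ i, κX i) × (∀ i, κY i)) × R) ℂ :=
  Matrix.of fun p q =>
    if p.1.2 = q.1.2 then
      (Fintype.card (∀ i, κY i) : ℂ)⁻¹ *
        ∑ c : ∀ i, κY i, P ((p.1.1, c), p.2) ((q.1.1, c), q.2)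
    else 0

/-- Partial trace over the last factor `B`. -/
noncomputable def trB {W A B : Type} [Fintype B]
    (J : Matrix (W × (A × B)) (W × (A × B)) ℂ) : Matrix (W × A) (W × A) ℂ :=
  Matrix.of fun p q => ∑ b : B, J (p.1, (p.2, b)) (q.1, (q.2, b))

/-- No Forward Signaling: `tr_X J = (tr_{XA} J) ⊗ (I_A/d_A)`. -/
def NFS {A B : Type} [Fintype A] [DecidableEq A] [Fintype B]
    (J : Matrix (((∀ i, κX i) × (∀ i, κY i)) × (A × B))
         (((∀ i, κX i) × (∀ i, κY i)) × (A × B)) ℂ) : Prop :=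
  ∀ (y y' : ∀ i, κY i) (a a' : A) (b b' : B),
    (∑ x : ∀ i, κX i, J ((x, y), (a, b)) ((x, y'), (a', b'))) =
      if a = a' then
        (Fintype.card A : ℂ)⁻¹ *
          ∑ x : ∀ i, κX i, ∑ c : A, J ((x, y), (c, b)) ((x, y'), (c, b'))
      else 0

/-- Membership in `Free`. -/
def FreeCond {A B : Type} [Fintype A] [DecidableEq A] [Fintype B] [DecidableEq B]
    (J : Matrix (((∀ i, κX i) × (∀ i, κY i)) × (A × B))
         (((∀ i, κX i) × (∀ i, κY i)) × (A × B)) ℂ) : Prop :=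
  J.PosSemidef ∧
  LNS (trB J) = (Fintype.card (∀ i, κX i) : ℂ)⁻¹ • 1 ∧
  NFS J

/-- Membership in `FreePar`. -/
def FreeParCond {A B : Type} [Fintype A] [DecidableEq A] [Fintype B] [DecidableEq B]
    (J : Matrix (((∀ i, κX i) × (∀ i, κY i)) × (A × B))
         (((∀ i, κX i) × (∀ i, κY i)) × (A × B)) ℂ) : Prop :=
  J.PosSemidef ∧
  trB J = floorYall (trB J) ∧
  (Matrix.of fun (a a' : A) =>
      ∑ w : (∀ i, κX i) × (∀ i, κY i), ∑ b : B, J (w, (a, b)) (w, (a', b))) =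
    ((Fintype.card (∀ i, κY i) : ℂ)) • (1 : Matrix A A ℂ) ∧
  NFS J

end Toolkit

/-- The link product `J ⋆ K := tr_{XY}[J·(Kᵀ⊗I_{AB})]`, an operator on `A ⊗ B`. -/
noncomputable def linkOut {W AB : Type} [Fintype W]
    (J : Matrix (W × AB) (W × AB) ℂ) (K : Matrix W W ℂ) : Matrix AB AB ℂ :=
  Matrix.of fun u v => ∑ w : W, ∑ w' : W, J (w, u) (w', v) * K w w'

/-- Trace norm of a Hermitian matrix. -/
noncomputable def traceNorm {n : Type} [Fintype n] [DecidableEq n]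
    (H : Matrix n n ℂ) : ℝ :=
  if h : H.IsHermitian then ∑ i, |h.eigenvalues i| else 0

/-- A density matrix: positive semidefinite with unit trace. -/
def IsDensity {n : Type} [Fintype n] (ρ : Matrix n n ℂ) : Prop :=
  ρ.PosSemidef ∧ ρ.trace = 1

/-- Action of the channel with Choi operator `J` on a state of R'⊗A. -/
noncomputable def applyChoi {A B R' : Type} [Fintype A]
    (J : Matrix (A × B) (A × B) ℂ) (ρ : Matrix (R' × A) (R' × A) ℂ) :
    Matrix (R' × B) (R' × B) ℂ :=
  Matrix.of fun p q => ∑ a : A, ∑ a' : A, ρ (p.1, a) (q.1, a') * J (a, p.2) (a', q.2)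

/-- Half the diamond distance, with a reference system of dimension d_A. -/
noncomputable def dDist {A B : Type} [Fintype A] [DecidableEq A] [Fintype B] [DecidableEq B]
    (J₁ J₂ : Matrix (A × B) (A × B) ℂ) : ℝ :=
  sSup { t : ℝ | ∃ ρ : Matrix (A × A) (A × A) ℂ, IsDensity ρ ∧
    t = (1 / 2) * traceNorm (applyChoi J₁ ρ - applyChoi J₂ ρ) }

/-- Choi operator of the list of ideal classical channels `(Δ^{m₁}, …, Δ^{m_N})`. -/
noncomputable def JDeltaProd {n : ℕ} (mv : Fin n → ℕ) :
    Matrix ((∀ j, Fin (mv j)) × (∀ j, Fin (mv j)))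
      ((∀ j, Fin (mv j)) × (∀ j, Fin (mv j))) ℂ :=
  Matrix.of fun u v =>
    ∏ j, (if u.1 j = u.2 j ∧ v.1 j = v.2 j ∧ u.1 j = v.1 j then (1 : ℂ) else 0)

set_option linter.unusedSectionVars false
set_option linter.unusedVariables false

/-! ### Auxiliary lemmas -/

section Helpers

lemma P18.conj_of_nonneg {z : ℂ} (h : 0 ≤ z) : (starRingEnd ℂ) z = z := by
  rw [Complex.le_def] at h
  apply Complex.ext
  · simp
  · simp [← h.2]

lemma P18.nonneg_inv_nat (k : ℕ) : (0:ℂ) ≤ ((k:ℂ))⁻¹ := by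
  have : ((k:ℂ))⁻¹ = (((k:ℝ)⁻¹ : ℝ) : ℂ) := by push_cast; ring
  rw [this, Complex.zero_le_real]
  positivity

lemma P18.sum_update_aux {n : ℕ} {κ : Fin n → Type} [∀ j, Fintype (κ j)]
    [∀ j, DecidableEq (κ j)] (j : Fin n) (f : (∀ i, κ i) → ℂ) :
    ∑ y : ∀ i, κ i, ∑ c : κ j, f (Function.update y j c)
      = (Fintype.card (κ j) : ℂ) * ∑ z, f z := by
  have key := Fintype.sum_equiv
    (⟨fun p => (Function.update p.1 j p.2, p.1 j),
     fun p => (Function.update p.1 j p.2, p.1 j),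
     fun p => by simp [Function.update_idem], fun p => by simp [Function.update_idem]⟩ :
      ((∀ i, κ i) × κ j) ≃ ((∀ i, κ i) × κ j))
    (fun p : (∀ i, κ i) × κ j => f (Function.update p.1 j p.2))
    (fun p => f p.1) (fun p => rfl)
  rw [Fintype.sum_prod_type] at key
  rw [key, Fintype.sum_prod_type]
  simp [Finset.mul_sum, mul_comm]

lemma P18.psd_smul_nonneg {U : Type} [Fintype U] {M : Matrix U U ℂ}
    (hM : M.PosSemidef) {c : ℂ} (hc : 0 ≤ c) : (c • M).PosSemidef := by
  rw [Matrix.posSemidef_iff_dotProduct_mulVec]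
  constructor
  · have h1 := hM.1
    have hcc : star c = c := by
      have := P18.conj_of_nonneg hc
      rwa [starRingEnd_apply] at this
    rw [Matrix.IsHermitian] at h1 ⊢
    rw [Matrix.conjTranspose_smul, h1, hcc]
  · intro v
    rw [Matrix.smul_mulVec, dotProduct_smul, smul_eq_mul]
    exact mul_nonneg hc (hM.dotProduct_mulVec_nonneg v)

/-- Sum of diagonal blocks of a PSD matrix over a sub-collection of blocks is PSD. -/
lemma P18.psd_ite_sum {W U : Type} [Fintype W] [Fintype U]
    (J : Matrix (W × U) (W × U) ℂ) (hJ : J.PosSemidef) (p : W → Prop) [DecidablePred p] :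
    (Matrix.of fun u v : U => ∑ w, if p w then J (w,u) (w,v) else 0).PosSemidef := by
  have hrw : (Matrix.of fun u v : U => ∑ w, if p w then J (w,u) (w,v) else 0)
      = ∑ w, if p w then J.submatrix (fun u : U => (w,u)) (fun u : U => (w,u)) else 0 := by
    ext u v
    rw [Matrix.sum_apply]
    simp only [Matrix.of_apply]
    refine Finset.sum_congr rfl fun w _ => ?_
    by_cases h : p w
    · simp only [if_pos h, Matrix.submatrix_apply]
    · simp only [if_neg h, Matrix.zero_apply]
  rw [hrw]
  refine Finset.sum_induction _ Matrix.PosSemidef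
    (fun a b ha hb => Matrix.PosSemidef.add ha hb) Matrix.PosSemidef.zero ?_
  intro w _
  split
  · exact hJ.submatrix _
  · exact Matrix.PosSemidef.zero

/-- A block-diagonal matrix with PSD blocks is PSD. -/
lemma P18.psd_blockDiag {W U : Type} [Fintype W] [DecidableEq W] [Fintype U]
    (G : W → Matrix U U ℂ) (hG : ∀ w, (G w).PosSemidef) :
    (Matrix.of fun p q : W × U => if p.1 = q.1 then G p.1 p.2 q.2 else 0).PosSemidef := by
  rw [Matrix.posSemidef_iff_dotProduct_mulVec]
  constructor
  · rw [Matrix.IsHermitian]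
    ext p q
    rw [Matrix.conjTranspose_apply]
    simp only [Matrix.of_apply]
    obtain ⟨wp, up⟩ := p
    obtain ⟨wq, uq⟩ := q
    by_cases h : wq = wp
    · subst h
      simp only [if_pos rfl]
      have h1 := (hG wq).1
      rw [Matrix.IsHermitian] at h1
      calc star (G wq uq up) = (G wq)ᴴ up uq := by rw [Matrix.conjTranspose_apply]
        _ = G wq up uq := by rw [h1]
    · rw [if_neg h, if_neg (fun hc => h hc.symm), star_zero]
  · intro v
    have key : dotProduct (star v) ((Matrix.of fun p q : W × U =>
          if p.1 = q.1 then G p.1 p.2 q.2 else 0).mulVec v)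
        = ∑ w, dotProduct (star (fun u => v (w,u))) ((G w).mulVec (fun u => v (w,u))) := by
      simp only [dotProduct, Matrix.mulVec, Pi.star_apply, Matrix.of_apply]
      rw [Fintype.sum_prod_type]
      refine Finset.sum_congr rfl fun w _ => ?_
      refine Finset.sum_congr rfl fun u _ => ?_
      congr 1
      rw [Fintype.sum_prod_type]
      rw [Finset.sum_eq_single w]
      · simp
      · intro w' _ hw
        simp [Ne.symm hw]
      · simp
    rw [key]
    exact Finset.sum_nonneg fun w _ => (hG w).dotProduct_mulVec_nonneg _

end Helpers

section Collapse

variable {n : ℕ} {mv : Fin n → ℕ}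

lemma P18.sum_diag_collapse {α : Type} [Fintype α] [DecidableEq α] (f : α × α → ℂ) :
    ∑ w : α × α, (if w.1 = w.2 then f w else 0) = ∑ x : α, f (x,x) := by
  rw [Fintype.sum_prod_type]
  refine Finset.sum_congr rfl fun x _ => ?_
  rw [Finset.sum_ite_eq Finset.univ x (fun y => f (x,y))]
  simp

lemma P18.JDeltaProd_apply (w w' : (∀ j, Fin (mv j)) × (∀ j, Fin (mv j))) :
    JDeltaProd mv w w' = if w.1 = w.2 ∧ w' = (w.1, w.1) then 1 else 0 := by
  show (∏ j, if w.1 j = w.2 j ∧ w'.1 j = w'.2 j ∧ w.1 j = w'.1 j then (1:ℂ) else 0) = _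
  rw [Finset.prod_boole]
  congr 1
  simp only [Finset.mem_univ, true_implies, eq_iff_iff]
  constructor
  · intro h
    have h1 : w.1 = w.2 := funext fun j => (h j).1
    have h3 : w.1 = w'.1 := funext fun j => (h j).2.2
    have h2 : w'.1 = w'.2 := funext fun j => (h j).2.1
    exact ⟨h1, Prod.ext h3.symm (h2 ▸ h3).symm⟩
  · rintro ⟨h1, h2⟩ j
    rw [h2]
    exact ⟨congrFun h1 j, rfl, rfl⟩

lemma P18.linkOut_delta {A B : Type} [Fintype A] [Fintype B]
    (J : Matrix (((∀ j, Fin (mv j)) × (∀ j, Fin (mv j))) × (A × B))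
         (((∀ j, Fin (mv j)) × (∀ j, Fin (mv j))) × (A × B)) ℂ) :
    linkOut J (JDeltaProd mv)
      = Matrix.of fun u v : A × B =>
          ∑ w : (∀ j, Fin (mv j)) × (∀ j, Fin (mv j)),
            if w.1 = w.2 then J (w,u) (w,v) else 0 := by
  ext u v
  show ∑ w, ∑ w', J (w,u) (w',v) * JDeltaProd mv w w' = _
  simp only [Matrix.of_apply]
  refine Finset.sum_congr rfl fun w _ => ?_
  by_cases hw : w.1 = w.2
  · rw [if_pos hw]
    have hw' : w = (w.1, w.1) := Prod.ext rfl hw.symm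
    rw [Finset.sum_eq_single (w.1, w.1)]
    · rw [P18.JDeltaProd_apply]
      rw [if_pos ⟨hw, rfl⟩, mul_one, ← hw']
    · intro w' _ hne
      rw [P18.JDeltaProd_apply, if_neg (fun hc => hne hc.2), mul_zero]
    · simp
  · rw [if_neg hw]
    apply Finset.sum_eq_zero
    intro w' _
    rw [P18.JDeltaProd_apply, if_neg (fun hc => hw hc.1), mul_zero]

end Collapse
section Invariance

variable {n : ℕ} {mv : Fin n → ℕ} {R : Type} [Fintype R]

lemma P18.sum_update_aux2 {κ : Fin n → Type} [∀ j, Fintype (κ j)]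
    [∀ j, DecidableEq (κ j)] (j : Fin n) (f : (∀ i, κ i) → (∀ i, κ i) → ℂ) :
    ∑ x : ∀ i, κ i, ∑ y : ∀ i, κ i, ∑ s : κ j, ∑ c : κ j,
        f (Function.update x j s) (Function.update y j c)
      = ((Fintype.card (κ j) : ℂ) * (Fintype.card (κ j) : ℂ)) * ∑ x, ∑ y, f x y := by
  have step1 : ∀ x : ∀ i, κ i, ∑ y : ∀ i, κ i, ∑ s : κ j, ∑ c : κ j,
      f (Function.update x j s) (Function.update y j c)
      = ∑ s : κ j, (Fintype.card (κ j) : ℂ) * ∑ z, f (Function.update x j s) z := by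
    intro x
    rw [Finset.sum_comm]
    refine Finset.sum_congr rfl fun s _ => ?_
    exact P18.sum_update_aux j (fun z => f (Function.update x j s) z)
  calc ∑ x : ∀ i, κ i, ∑ y : ∀ i, κ i, ∑ s : κ j, ∑ c : κ j,
        f (Function.update x j s) (Function.update y j c)
      = ∑ x : ∀ i, κ i, ∑ s : κ j, (Fintype.card (κ j) : ℂ) * ∑ z, f (Function.update x j s) z := by
        exact Finset.sum_congr rfl fun x _ => step1 x
    _ = (Fintype.card (κ j) : ℂ) * ∑ x : ∀ i, κ i, ∑ s : κ j, ∑ z, f (Function.update x j s) z := by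
        rw [Finset.mul_sum]
        refine Finset.sum_congr rfl fun x _ => ?_
        rw [Finset.mul_sum]
    _ = (Fintype.card (κ j) : ℂ) * ∑ x : ∀ i, κ i, ∑ z, ∑ s : κ j, f (Function.update x j s) z := by
        congr 1
        exact Finset.sum_congr rfl fun x _ => Finset.sum_comm
    _ = (Fintype.card (κ j) : ℂ) * ∑ z, ∑ x : ∀ i, κ i, ∑ s : κ j, f (Function.update x j s) z := by
        congr 1
        exact Finset.sum_comm
    _ = (Fintype.card (κ j) : ℂ) * ∑ z, (Fintype.card (κ j) : ℂ) * ∑ x, f x z := by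
        congr 1
        exact Finset.sum_congr rfl fun z _ => P18.sum_update_aux j (fun x => f x z)
    _ = ((Fintype.card (κ j) : ℂ) * (Fintype.card (κ j) : ℂ)) * ∑ x, ∑ y, f x y := by
        rw [← Finset.mul_sum, ← mul_assoc]
        congr 1
        exact Finset.sum_comm

lemma P18.sum_floorY_diag (j : Fin n) (hj : mv j ≠ 0)
    (Q : Matrix (((∀ i, Fin (mv i)) × (∀ i, Fin (mv i))) × R)
         (((∀ i, Fin (mv i)) × (∀ i, Fin (mv i))) × R) ℂ) (r r' : R) :
    ∑ w : (∀ i, Fin (mv i)) × (∀ i, Fin (mv i)), floorY j Q (w,r) (w,r')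
      = ∑ w : (∀ i, Fin (mv i)) × (∀ i, Fin (mv i)), Q (w,r) (w,r') := by
  rw [Fintype.sum_prod_type, Fintype.sum_prod_type]
  refine Finset.sum_congr rfl fun x _ => ?_
  have hval : ∀ y : ∀ i, Fin (mv i), floorY j Q ((x,y),r) ((x,y),r')
      = (mv j : ℂ)⁻¹ * ∑ c : Fin (mv j),
          Q ((x, Function.update y j c), r) ((x, Function.update y j c), r') := by
    intro y
    show (if y j = y j then _ else _) = _
    rw [if_pos rfl, Fintype.card_fin]
  rw [Finset.sum_congr rfl fun y _ => hval y, ← Finset.mul_sum]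
  have ha := P18.sum_update_aux j (fun z => Q ((x,z),r) ((x,z),r'))
  rw [Fintype.card_fin] at ha
  rw [ha, inv_mul_cancel_left₀ (Nat.cast_ne_zero.mpr hj)]

lemma P18.sum_floorXY_diag (j : Fin n) (hj : mv j ≠ 0)
    (Q : Matrix (((∀ i, Fin (mv i)) × (∀ i, Fin (mv i))) × R)
         (((∀ i, Fin (mv i)) × (∀ i, Fin (mv i))) × R) ℂ) (r r' : R) :
    ∑ w : (∀ i, Fin (mv i)) × (∀ i, Fin (mv i)), floorXY j Q (w,r) (w,r')
      = ∑ w : (∀ i, Fin (mv i)) × (∀ i, Fin (mv i)), Q (w,r) (w,r') := by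
  rw [Fintype.sum_prod_type, Fintype.sum_prod_type]
  have hval : ∀ x y : ∀ i, Fin (mv i), floorXY j Q ((x,y),r) ((x,y),r')
      = ((mv j : ℂ) * (mv j : ℂ))⁻¹ * ∑ s : Fin (mv j), ∑ c : Fin (mv j),
          Q ((Function.update x j s, Function.update y j c), r)
            ((Function.update x j s, Function.update y j c), r') := by
    intro x y
    show (if x j = x j ∧ y j = y j then _ else _) = _
    rw [if_pos ⟨rfl, rfl⟩, Fintype.card_fin]
  calc ∑ x, ∑ y, floorXY j Q ((x,y),r) ((x,y),r')
      = ((mv j : ℂ) * (mv j : ℂ))⁻¹ * ∑ x, ∑ y, ∑ s : Fin (mv j), ∑ c : Fin (mv j),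
          Q ((Function.update x j s, Function.update y j c), r)
            ((Function.update x j s, Function.update y j c), r') := by
        rw [Finset.mul_sum]
        refine Finset.sum_congr rfl fun x _ => ?_
        rw [Finset.mul_sum]
        exact Finset.sum_congr rfl fun y _ => hval x y
    _ = ∑ x, ∑ y, Q ((x,y),r) ((x,y),r') := by
        have ha := P18.sum_update_aux2 j (fun x y => Q ((x,y),r) ((x,y),r'))
        rw [Fintype.card_fin] at ha
        rw [ha, inv_mul_cancel_left₀]
        exact mul_ne_zero (Nat.cast_ne_zero.mpr hj) (Nat.cast_ne_zero.mpr hj)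

lemma P18.sum_floorY_match (j : Fin n)
    (Q : Matrix (((∀ i, Fin (mv i)) × (∀ i, Fin (mv i))) × R)
         (((∀ i, Fin (mv i)) × (∀ i, Fin (mv i))) × R) ℂ) (r r' : R) :
    ∑ x : ∀ i, Fin (mv i), floorY j Q ((x,x),r) ((x,x),r')
      = (mv j : ℂ)⁻¹ * ∑ z : ∀ i, Fin (mv i), ∑ c : Fin (mv j),
          Q ((z, Function.update z j c), r) ((z, Function.update z j c), r') := by
  have hval : ∀ x : ∀ i, Fin (mv i), floorY j Q ((x,x),r) ((x,x),r')
      = (mv j : ℂ)⁻¹ * ∑ c : Fin (mv j),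
          Q ((x, Function.update x j c), r) ((x, Function.update x j c), r') := by
    intro x
    show (if x j = x j then _ else _) = _
    rw [if_pos rfl, Fintype.card_fin]
  rw [Finset.sum_congr rfl fun x _ => hval x, ← Finset.mul_sum]

lemma P18.sum_floorXY_match (j : Fin n) (hj : mv j ≠ 0)
    (Q : Matrix (((∀ i, Fin (mv i)) × (∀ i, Fin (mv i))) × R)
         (((∀ i, Fin (mv i)) × (∀ i, Fin (mv i))) × R) ℂ) (r r' : R) :
    ∑ x : ∀ i, Fin (mv i), floorXY j Q ((x,x),r) ((x,x),r')
      = (mv j : ℂ)⁻¹ * ∑ z : ∀ i, Fin (mv i), ∑ c : Fin (mv j),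
          Q ((z, Function.update z j c), r) ((z, Function.update z j c), r') := by
  have hval : ∀ x : ∀ i, Fin (mv i), floorXY j Q ((x,x),r) ((x,x),r')
      = ((mv j : ℂ) * (mv j : ℂ))⁻¹ * ∑ s : Fin (mv j), ∑ c : Fin (mv j),
          Q ((Function.update x j s, Function.update (Function.update x j s) j c), r)
            ((Function.update x j s, Function.update (Function.update x j s) j c), r') := by
    intro x
    show (if x j = x j ∧ x j = x j then _ else _) = _
    rw [if_pos ⟨rfl, rfl⟩, Fintype.card_fin]
    congr 1
    refine Finset.sum_congr rfl fun s _ => Finset.sum_congr rfl fun c _ => ?_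
    rw [Function.update_idem]
  rw [Finset.sum_congr rfl fun x _ => hval x, ← Finset.mul_sum]
  have ha := P18.sum_update_aux j (fun z => ∑ c : Fin (mv j),
    Q ((z, Function.update z j c), r) ((z, Function.update z j c), r'))
  rw [Fintype.card_fin] at ha
  rw [ha, mul_inv, mul_assoc, inv_mul_cancel_left₀ (Nat.cast_ne_zero.mpr hj)]

end Invariance
section Derive

variable {n : ℕ} {mv : Fin n → ℕ} {R : Type} [Fintype R]

lemma P18.LNS_sum_diag (hmv : ∀ j, 1 ≤ mv j)
    (P : Matrix (((∀ i, Fin (mv i)) × (∀ i, Fin (mv i))) × R)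
         (((∀ i, Fin (mv i)) × (∀ i, Fin (mv i))) × R) ℂ) (r r' : R) :
    ∑ w : (∀ i, Fin (mv i)) × (∀ i, Fin (mv i)), LNS P (w,r) (w,r')
      = ∑ w : (∀ i, Fin (mv i)) × (∀ i, Fin (mv i)), P (w,r) (w,r') := by
  have main : ∀ (l : List (Fin n))
      (Q : Matrix (((∀ i, Fin (mv i)) × (∀ i, Fin (mv i))) × R)
           (((∀ i, Fin (mv i)) × (∀ i, Fin (mv i))) × R) ℂ),
      ∑ w : (∀ i, Fin (mv i)) × (∀ i, Fin (mv i)),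
          (l.foldr (fun j Q => Q - floorY j Q + floorXY j Q) Q) (w,r) (w,r')
        = ∑ w : (∀ i, Fin (mv i)) × (∀ i, Fin (mv i)), Q (w,r) (w,r') := by
    intro l
    induction l with
    | nil => intro Q; rfl
    | cons j t ih =>
      intro Q
      simp only [List.foldr_cons]
      set Q' := t.foldr (fun j Q => Q - floorY j Q + floorXY j Q) Q with hQ'
      have hstep : ∑ w : (∀ i, Fin (mv i)) × (∀ i, Fin (mv i)),
          (Q' - floorY j Q' + floorXY j Q') (w,r) (w,r')
          = ∑ w : (∀ i, Fin (mv i)) × (∀ i, Fin (mv i)), Q' (w,r) (w,r') := by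
        simp only [Matrix.add_apply, Matrix.sub_apply]
        rw [Finset.sum_add_distrib, Finset.sum_sub_distrib,
          P18.sum_floorY_diag j (Nat.one_le_iff_ne_zero.mp (hmv j)) Q' r r',
          P18.sum_floorXY_diag j (Nat.one_le_iff_ne_zero.mp (hmv j)) Q' r r']
        ring
      rw [hstep, ih Q]
  exact main _ P

lemma P18.LNS_sum_match (hmv : ∀ j, 1 ≤ mv j)
    (P : Matrix (((∀ i, Fin (mv i)) × (∀ i, Fin (mv i))) × R)
         (((∀ i, Fin (mv i)) × (∀ i, Fin (mv i))) × R) ℂ) (r r' : R) :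
    ∑ x : ∀ i, Fin (mv i), LNS P ((x,x),r) ((x,x),r')
      = ∑ x : ∀ i, Fin (mv i), P ((x,x),r) ((x,x),r') := by
  have main : ∀ (l : List (Fin n))
      (Q : Matrix (((∀ i, Fin (mv i)) × (∀ i, Fin (mv i))) × R)
           (((∀ i, Fin (mv i)) × (∀ i, Fin (mv i))) × R) ℂ),
      ∑ x : ∀ i, Fin (mv i),
          (l.foldr (fun j Q => Q - floorY j Q + floorXY j Q) Q) ((x,x),r) ((x,x),r')
        = ∑ x : ∀ i, Fin (mv i), Q ((x,x),r) ((x,x),r') := by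
    intro l
    induction l with
    | nil => intro Q; rfl
    | cons j t ih =>
      intro Q
      simp only [List.foldr_cons]
      set Q' := t.foldr (fun j Q => Q - floorY j Q + floorXY j Q) Q with hQ'
      have hstep : ∑ x : ∀ i, Fin (mv i),
          (Q' - floorY j Q' + floorXY j Q') ((x,x),r) ((x,x),r')
          = ∑ x : ∀ i, Fin (mv i), Q' ((x,x),r) ((x,x),r') := by
        simp only [Matrix.add_apply, Matrix.sub_apply]
        rw [Finset.sum_add_distrib, Finset.sum_sub_distrib,
          P18.sum_floorY_match j Q' r r',
          P18.sum_floorXY_match j (Nat.one_le_iff_ne_zero.mp (hmv j)) Q' r r']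
        ring
      rw [hstep, ih Q]
  exact main _ P

end Derive
section Derive2

variable {A B : Type} [Fintype A] [DecidableEq A] [Fintype B] [DecidableEq B]
variable {n : ℕ} {mv : Fin n → ℕ}

lemma P18.card_X : (Fintype.card (∀ j, Fin (mv j))) = ∏ j, mv j := by simp

lemma P18.smul_one_apply {I : Type} [Fintype I] [DecidableEq I] (c : ℂ) (p q : I) :
    (c • (1 : Matrix I I ℂ)) p q = c * (if p = q then 1 else 0) := by
  simp [Matrix.one_apply]

lemma P18.free_diag (hmv : ∀ j, 1 ≤ mv j)
    (J : Matrix (((∀ j, Fin (mv j)) × (∀ j, Fin (mv j))) × (A × B))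
         (((∀ j, Fin (mv j)) × (∀ j, Fin (mv j))) × (A × B)) ℂ)
    (hL : LNS (trB J) = (Fintype.card (∀ j, Fin (mv j)) : ℂ)⁻¹ • 1) :
    (∀ a a' : A, (∑ w : (∀ j, Fin (mv j)) × (∀ j, Fin (mv j)), ∑ b : B,
        J (w,(a,b)) (w,(a',b))) = ((∏ j, mv j : ℕ) : ℂ) * (if a = a' then 1 else 0)) ∧
    (∀ a a' : A, (∑ x : ∀ j, Fin (mv j), ∑ b : B,
        J ((x,x),(a,b)) ((x,x),(a',b))) = (if a = a' then 1 else 0)) := by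
  have hmpos : 0 < ∏ j, mv j := Finset.prod_pos (fun j _ => hmv j)
  have hmne : ((∏ j, mv j : ℕ) : ℂ) ≠ 0 := Nat.cast_ne_zero.mpr hmpos.ne'
  have hprodC : (∏ i : Fin n, ((mv i : ℕ) : ℂ)) ≠ 0 := by
    rw [← Nat.cast_prod]
    exact Nat.cast_ne_zero.mpr hmpos.ne'
  have hcard : (Fintype.card (∀ j, Fin (mv j)) : ℂ) = ((∏ j, mv j : ℕ) : ℂ) := by
    rw [P18.card_X]
  have hP : ∀ (w : (∀ j, Fin (mv j)) × (∀ j, Fin (mv j))) (a a' : A),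
      trB J (w,a) (w,a') = ∑ b : B, J (w,(a,b)) (w,(a',b)) := fun w a a' => rfl
  constructor
  · intro a a'
    have h1 := P18.LNS_sum_diag hmv (trB J) a a'
    rw [hL] at h1
    have h2 : ∑ w : (∀ j, Fin (mv j)) × (∀ j, Fin (mv j)),
        ((Fintype.card (∀ j, Fin (mv j)) : ℂ)⁻¹ • (1 : Matrix _ _ ℂ)) (w,a) (w,a')
        = ((∏ j, mv j : ℕ) : ℂ) * (if a = a' then 1 else 0) := by
      have : ∀ w : (∀ j, Fin (mv j)) × (∀ j, Fin (mv j)),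
          ((Fintype.card (∀ j, Fin (mv j)) : ℂ)⁻¹ • (1 : Matrix _ _ ℂ)) (w,a) (w,a')
          = (Fintype.card (∀ j, Fin (mv j)) : ℂ)⁻¹ * (if a = a' then 1 else 0) := by
        intro w
        rw [P18.smul_one_apply]
        congr 1
        simp [Prod.ext_iff]
      rw [Finset.sum_congr rfl fun w _ => this w, Finset.sum_const, Finset.card_univ,
        nsmul_eq_mul]
      have hmm : (Fintype.card ((∀ j, Fin (mv j)) × (∀ j, Fin (mv j))) : ℂ)
          = ((∏ j, mv j : ℕ) : ℂ) * ((∏ j, mv j : ℕ) : ℂ) := by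
        rw [Fintype.card_prod]
        push_cast [P18.card_X]
        ring
      rw [hmm, hcard]
      by_cases h : a = a' <;> simp [h] <;> field_simp [hprodC]
    rw [h2] at h1
    rw [← Finset.sum_congr rfl fun w _ => hP w a a']
    exact h1.symm
  · intro a a'
    have h1 := P18.LNS_sum_match hmv (trB J) a a'
    rw [hL] at h1
    have h2 : ∑ x : ∀ j, Fin (mv j),
        ((Fintype.card (∀ j, Fin (mv j)) : ℂ)⁻¹ • (1 : Matrix _ _ ℂ)) ((x,x),a) ((x,x),a')
        = (if a = a' then 1 else 0) := by
      have : ∀ x : ∀ j, Fin (mv j),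
          ((Fintype.card (∀ j, Fin (mv j)) : ℂ)⁻¹ • (1 : Matrix _ _ ℂ)) ((x,x),a) ((x,x),a')
          = (Fintype.card (∀ j, Fin (mv j)) : ℂ)⁻¹ * (if a = a' then 1 else 0) := by
        intro x
        rw [P18.smul_one_apply]
        congr 1
        simp [Prod.ext_iff]
      rw [Finset.sum_congr rfl fun x _ => this x, Finset.sum_const, Finset.card_univ,
        nsmul_eq_mul, hcard]
      by_cases h : a = a' <;> simp [h] <;> field_simp [hprodC]
    rw [h2] at h1
    rw [← Finset.sum_congr rfl fun x _ => hP (x,x) a a']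
    exact h1.symm

lemma P18.freePar_diag (hmv : ∀ j, 1 ≤ mv j)
    (J : Matrix (((∀ j, Fin (mv j)) × (∀ j, Fin (mv j))) × (A × B))
         (((∀ j, Fin (mv j)) × (∀ j, Fin (mv j))) × (A × B)) ℂ)
    (hb : trB J = floorYall (trB J))
    (hc : (Matrix.of fun (a a' : A) =>
        ∑ w : (∀ j, Fin (mv j)) × (∀ j, Fin (mv j)), ∑ b : B, J (w, (a, b)) (w, (a', b))) =
      ((Fintype.card (∀ j, Fin (mv j)) : ℂ)) • (1 : Matrix A A ℂ)) :
    (∀ a a' : A, (∑ w : (∀ j, Fin (mv j)) × (∀ j, Fin (mv j)), ∑ b : B,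
        J (w,(a,b)) (w,(a',b))) = ((∏ j, mv j : ℕ) : ℂ) * (if a = a' then 1 else 0)) ∧
    (∀ a a' : A, (∑ x : ∀ j, Fin (mv j), ∑ b : B,
        J ((x,x),(a,b)) ((x,x),(a',b))) = (if a = a' then 1 else 0)) := by
  have hmpos : 0 < ∏ j, mv j := Finset.prod_pos (fun j _ => hmv j)
  have hmne : ((∏ j, mv j : ℕ) : ℂ) ≠ 0 := Nat.cast_ne_zero.mpr hmpos.ne'
  have hprodC : (∏ i : Fin n, ((mv i : ℕ) : ℂ)) ≠ 0 := by
    rw [← Nat.cast_prod]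
    exact Nat.cast_ne_zero.mpr hmpos.ne'
  have hcard : (Fintype.card (∀ j, Fin (mv j)) : ℂ) = ((∏ j, mv j : ℕ) : ℂ) := by
    rw [P18.card_X]
  have hall : ∀ a a' : A, (∑ w : (∀ j, Fin (mv j)) × (∀ j, Fin (mv j)), ∑ b : B,
      J (w,(a,b)) (w,(a',b))) = ((∏ j, mv j : ℕ) : ℂ) * (if a = a' then 1 else 0) := by
    intro a a'
    have := congrFun (congrFun hc a) a'
    simp only [Matrix.of_apply] at this
    rw [this, P18.smul_one_apply, hcard]
  refine ⟨hall, ?_⟩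
  intro a a'
  have hP : ∀ (w : (∀ j, Fin (mv j)) × (∀ j, Fin (mv j))) (a a' : A),
      trB J (w,a) (w,a') = ∑ b : B, J (w,(a,b)) (w,(a',b)) := fun w a a' => rfl
  have key : ∀ x : ∀ j, Fin (mv j), trB J ((x,x),a) ((x,x),a')
      = (Fintype.card (∀ j, Fin (mv j)) : ℂ)⁻¹ *
          ∑ c : ∀ j, Fin (mv j), trB J ((x,c),a) ((x,c),a') := by
    intro x
    conv_lhs => rw [hb]
    show (if (x : ∀ j, Fin (mv j)) = x then _ else _) = _
    rw [if_pos rfl]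
  have h2 : ∑ x : ∀ j, Fin (mv j), ∑ b : B, J ((x,x),(a,b)) ((x,x),(a',b))
      = (Fintype.card (∀ j, Fin (mv j)) : ℂ)⁻¹ *
        ∑ w : (∀ j, Fin (mv j)) × (∀ j, Fin (mv j)), trB J (w,a) (w,a') := by
    calc ∑ x : ∀ j, Fin (mv j), ∑ b : B, J ((x,x),(a,b)) ((x,x),(a',b))
        = ∑ x : ∀ j, Fin (mv j), trB J ((x,x),a) ((x,x),a') :=
          Finset.sum_congr rfl fun x _ => (hP (x,x) a a').symm
      _ = ∑ x : ∀ j, Fin (mv j), (Fintype.card (∀ j, Fin (mv j)) : ℂ)⁻¹ *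
            ∑ c : ∀ j, Fin (mv j), trB J ((x,c),a) ((x,c),a') :=
          Finset.sum_congr rfl fun x _ => key x
      _ = (Fintype.card (∀ j, Fin (mv j)) : ℂ)⁻¹ * ∑ x : ∀ j, Fin (mv j),
            ∑ c : ∀ j, Fin (mv j), trB J ((x,c),a) ((x,c),a') := by
          rw [Finset.mul_sum]
      _ = (Fintype.card (∀ j, Fin (mv j)) : ℂ)⁻¹ *
            ∑ w : (∀ j, Fin (mv j)) × (∀ j, Fin (mv j)), trB J (w,a) (w,a') := by
          rw [Fintype.sum_prod_type]
  rw [h2, Finset.sum_congr rfl fun w (_ : w ∈ Finset.univ) => hP w a a',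
    hall a a', hcard]
  by_cases h : a = a' <;> field_simp [h]

end Derive2
section OneSlot

variable {R : Type} [Fintype R] [DecidableEq R] {m : ℕ}

lemma P18.fin1_ext {γ : Type} (f g : Fin 1 → γ) (h : f 0 = g 0) : f = g :=
  funext fun i => by rw [Subsingleton.elim i 0]; exact h

lemma P18.fin1_upd (f g : Fin 1 → Fin m) (c : Fin m) :
    Function.update f 0 c = Function.update g 0 c :=
  P18.fin1_ext _ _ (by simp)

lemma P18.smul_one_entry {I : Type} [Fintype I] [DecidableEq I] (c : ℂ) (p q : I) :
    (c • (1 : Matrix I I ℂ)) p q = c * (if p = q then 1 else 0) := by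
  simp [Matrix.one_apply]

lemma P18.floorY_one (hm : m ≠ 0) (c : ℂ) :
    floorY (N := 1) (κX := fun _ => Fin m) (κY := fun _ => Fin m) (R := R) 0
        (c • (1 : Matrix _ _ ℂ))
      = c • (1 : Matrix _ _ ℂ) := by
  ext p q
  show (if p.1.2 0 = q.1.2 0 then
      (Fintype.card (Fin m) : ℂ)⁻¹ * ∑ cc : Fin m,
        (c • (1 : Matrix _ _ ℂ)) ((p.1.1, Function.update p.1.2 0 cc), p.2)
          ((q.1.1, Function.update q.1.2 0 cc), q.2)
    else 0) = _
  have hterm : ∀ cc : Fin m,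
      (c • (1 : Matrix (((Fin 1 → Fin m) × (Fin 1 → Fin m)) × R) _ ℂ))
        ((p.1.1, Function.update p.1.2 0 cc), p.2) ((q.1.1, Function.update q.1.2 0 cc), q.2)
      = c * (if p.1.1 = q.1.1 ∧ p.2 = q.2 then 1 else 0) := by
    intro cc
    rw [P18.smul_one_entry]
    congr 1
    have hupd := P18.fin1_upd p.1.2 q.1.2 cc
    by_cases h1 : p.1.1 = q.1.1 <;> by_cases h2 : p.2 = q.2 <;>
      simp [Prod.ext_iff, h1, h2, hupd]
  rw [P18.smul_one_entry]
  by_cases hy : p.1.2 0 = q.1.2 0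
  · rw [if_pos hy, Finset.sum_congr rfl fun cc _ => hterm cc, Finset.sum_const,
      Finset.card_univ, nsmul_eq_mul, Fintype.card_fin]
    have hyy : p.1.2 = q.1.2 := P18.fin1_ext _ _ hy
    have hiff : (p = q) ↔ (p.1.1 = q.1.1 ∧ p.2 = q.2) := by
      constructor
      · intro h; rw [h]; exact ⟨rfl, rfl⟩
      · rintro ⟨h1, h2⟩
        have : p.1 = q.1 := Prod.ext h1 hyy
        exact Prod.ext this h2
    rw [inv_mul_cancel_left₀ (Nat.cast_ne_zero.mpr hm)]
    exact congrArg (fun t => c * t) (if_congr hiff.symm rfl rfl)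
  · rw [if_neg hy]
    have : ¬ (p = q) := fun hc => hy (by rw [hc])
    rw [if_neg this, mul_zero]

lemma P18.floorXY_one (hm : m ≠ 0) (c : ℂ) :
    floorXY (N := 1) (κX := fun _ => Fin m) (κY := fun _ => Fin m) (R := R) 0
        (c • (1 : Matrix _ _ ℂ))
      = c • (1 : Matrix _ _ ℂ) := by
  ext p q
  show (if p.1.1 0 = q.1.1 0 ∧ p.1.2 0 = q.1.2 0 then
      ((Fintype.card (Fin m) : ℂ) * (Fintype.card (Fin m) : ℂ))⁻¹ *
        ∑ s : Fin m, ∑ cc : Fin m,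
        (c • (1 : Matrix _ _ ℂ)) ((Function.update p.1.1 0 s, Function.update p.1.2 0 cc), p.2)
          ((Function.update q.1.1 0 s, Function.update q.1.2 0 cc), q.2)
    else 0) = _
  have hterm : ∀ s cc : Fin m,
      (c • (1 : Matrix (((Fin 1 → Fin m) × (Fin 1 → Fin m)) × R) _ ℂ))
        ((Function.update p.1.1 0 s, Function.update p.1.2 0 cc), p.2)
        ((Function.update q.1.1 0 s, Function.update q.1.2 0 cc), q.2)
      = c * (if p.2 = q.2 then 1 else 0) := by
    intro s cc
    rw [P18.smul_one_entry]
    congr 1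
    have hupd1 := P18.fin1_upd p.1.1 q.1.1 s
    have hupd2 := P18.fin1_upd p.1.2 q.1.2 cc
    by_cases h2 : p.2 = q.2 <;> simp [Prod.ext_iff, h2, hupd1, hupd2]
  rw [P18.smul_one_entry]
  by_cases hxy : p.1.1 0 = q.1.1 0 ∧ p.1.2 0 = q.1.2 0
  · rw [if_pos hxy,
      Finset.sum_congr rfl fun s _ => Finset.sum_congr rfl fun cc _ => hterm s cc]
    simp only [Finset.sum_const, Finset.card_univ, nsmul_eq_mul, Fintype.card_fin]
    have hxx : p.1.1 = q.1.1 := P18.fin1_ext _ _ hxy.1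
    have hyy : p.1.2 = q.1.2 := P18.fin1_ext _ _ hxy.2
    have hiff : (p = q) ↔ (p.2 = q.2) := by
      constructor
      · intro h; rw [h]
      · intro h2
        exact Prod.ext (Prod.ext hxx hyy) h2
    have harith : ∀ t : ℂ, ((m:ℂ)*(m:ℂ))⁻¹ * ((m:ℂ)*((m:ℂ)*t)) = t := by
      intro t
      have hmc : (m:ℂ) ≠ 0 := Nat.cast_ne_zero.mpr hm
      field_simp
    rw [harith]
    exact congrArg (fun t => c * t) (if_congr hiff.symm rfl rfl)
  · rw [if_neg hxy]
    have : ¬ (p = q) := fun hc => hxy (by rw [hc]; exact ⟨rfl, rfl⟩)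
    rw [if_neg this, mul_zero]

lemma P18.floorYall_one (hm : m ≠ 0) (c : ℂ) :
    floorYall (N := 1) (κX := fun _ => Fin m) (κY := fun _ => Fin m) (R := R)
        (c • (1 : Matrix _ _ ℂ))
      = c • (1 : Matrix _ _ ℂ) := by
  ext p q
  show (if p.1.2 = q.1.2 then
      (Fintype.card (Fin 1 → Fin m) : ℂ)⁻¹ * ∑ cc : Fin 1 → Fin m,
        (c • (1 : Matrix _ _ ℂ)) ((p.1.1, cc), p.2) ((q.1.1, cc), q.2)
    else 0) = _
  have hterm : ∀ cc : Fin 1 → Fin m,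
      (c • (1 : Matrix (((Fin 1 → Fin m) × (Fin 1 → Fin m)) × R) _ ℂ))
        ((p.1.1, cc), p.2) ((q.1.1, cc), q.2)
      = c * (if p.1.1 = q.1.1 ∧ p.2 = q.2 then 1 else 0) := by
    intro cc
    rw [P18.smul_one_entry]
    congr 1
    by_cases h1 : p.1.1 = q.1.1 <;> by_cases h2 : p.2 = q.2 <;>
      simp [Prod.ext_iff, h1, h2]
  rw [P18.smul_one_entry]
  have hcard : (Fintype.card (Fin 1 → Fin m) : ℂ) = (m : ℂ) := by
    rw [Fintype.card_fun]
    simp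
  by_cases hy : p.1.2 = q.1.2
  · rw [if_pos hy, Finset.sum_congr rfl fun cc _ => hterm cc, Finset.sum_const,
      Finset.card_univ, nsmul_eq_mul, hcard]
    have hiff : (p = q) ↔ (p.1.1 = q.1.1 ∧ p.2 = q.2) := by
      constructor
      · intro h; rw [h]; exact ⟨rfl, rfl⟩
      · rintro ⟨h1, h2⟩
        exact Prod.ext (Prod.ext h1 hy) h2
    rw [inv_mul_cancel_left₀ (Nat.cast_ne_zero.mpr hm)]
    exact congrArg (fun t => c * t) (if_congr hiff.symm rfl rfl)
  · rw [if_neg hy]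
    have : ¬ (p = q) := fun hc => hy (by rw [hc])
    rw [if_neg this, mul_zero]

end OneSlot
section GmatSection

variable {A B : Type} [Fintype A] [DecidableEq A] [Fintype B] [DecidableEq B]

/-- The blocks of the canonical parallel simulator. -/
noncomputable def P18.Gmat (m : ℕ) (SM SD : Matrix (A × B) (A × B) ℂ) :
    (Fin 1 → Fin m) → (Fin 1 → Fin m) → Matrix (A × B) (A × B) ℂ :=
  fun x y => if x = y then ((m : ℕ) : ℂ)⁻¹ • SM
    else (((m : ℕ) : ℂ) * ((m - 1 : ℕ) : ℂ))⁻¹ • SD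

lemma P18.cardT (m : ℕ) : Fintype.card (Fin 1 → Fin m) = m := by simp

lemma P18.Gmat_psd (m : ℕ) {SM SD : Matrix (A × B) (A × B) ℂ}
    (hSM : SM.PosSemidef) (hSD : SD.PosSemidef) (x y : Fin 1 → Fin m) :
    (P18.Gmat m SM SD x y).PosSemidef := by
  unfold P18.Gmat
  split
  · exact P18.psd_smul_nonneg hSM (P18.nonneg_inv_nat m)
  · have hcast : ((m : ℕ) : ℂ) * ((m - 1 : ℕ) : ℂ) = ((m * (m-1) : ℕ) : ℂ) := by
      push_cast
      ring
    rw [hcast]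
    exact P18.psd_smul_nonneg hSD (P18.nonneg_inv_nat _)

lemma P18.Gmat_sum {m : ℕ} (hm : m ≠ 0) {SM SD : Matrix (A × B) (A × B) ℂ}
    (hSDzero : m = 1 → SD = 0) (y : Fin 1 → Fin m) :
    ∑ x : Fin 1 → Fin m, P18.Gmat m SM SD x y = ((m : ℕ) : ℂ)⁻¹ • (SM + SD) := by
  have hdecomp : ∀ x : Fin 1 → Fin m, P18.Gmat m SM SD x y
      = (if x = y then (((m : ℕ) : ℂ)⁻¹ • SM - (((m : ℕ) : ℂ) * ((m - 1 : ℕ) : ℂ))⁻¹ • SD)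
          else 0) + (((m : ℕ) : ℂ) * ((m - 1 : ℕ) : ℂ))⁻¹ • SD := by
    intro x
    unfold P18.Gmat
    by_cases h : x = y
    · rw [if_pos h, if_pos h, sub_add_cancel]
    · rw [if_neg h, if_neg h, zero_add]
  rw [Finset.sum_congr rfl fun x _ => hdecomp x, Finset.sum_add_distrib]
  rw [Finset.sum_ite_eq' Finset.univ y
    (fun _ => ((m : ℕ) : ℂ)⁻¹ • SM - (((m : ℕ) : ℂ) * ((m - 1 : ℕ) : ℂ))⁻¹ • SD)]
  rw [Finset.sum_const, Finset.card_univ, P18.cardT]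
  rw [← Nat.cast_smul_eq_nsmul ℂ m]
  simp only [Finset.mem_univ, if_pos]
  by_cases hm1 : m = 1
  · rw [hSDzero hm1]
    simp
  · have hmc : ((m : ℕ) : ℂ) ≠ 0 := Nat.cast_ne_zero.mpr hm
    have hm1' : ((m : ℕ) : ℂ) ≠ 1 := fun hc => hm1 (by exact_mod_cast hc)
    have hcast : ((m - 1 : ℕ) : ℂ) = ((m : ℕ) : ℂ) - 1 := by
      rw [Nat.cast_sub (Nat.one_le_iff_ne_zero.mpr hm), Nat.cast_one]
    have hc2 : ((m : ℕ) : ℂ) * (((m : ℕ) : ℂ) * ((m - 1 : ℕ) : ℂ))⁻¹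
        - (((m : ℕ) : ℂ) * ((m - 1 : ℕ) : ℂ))⁻¹ = ((m : ℕ) : ℂ)⁻¹ := by
      rw [hcast]
      have hsub : ((m : ℕ) : ℂ) - 1 ≠ 0 := sub_ne_zero.mpr hm1'
      field_simp
    rw [smul_smul, smul_add]
    have hre : ((m : ℕ) : ℂ)⁻¹ • SM - (((m : ℕ) : ℂ) * ((m - 1 : ℕ) : ℂ))⁻¹ • SD
        + (((m : ℕ) : ℂ) * (((m : ℕ) : ℂ) * ((m - 1 : ℕ) : ℂ))⁻¹) • SD
        = ((m : ℕ) : ℂ)⁻¹ • SM + ((((m : ℕ) : ℂ) * (((m : ℕ) : ℂ) * ((m - 1 : ℕ) : ℂ))⁻¹) • SD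
          - (((m : ℕ) : ℂ) * ((m - 1 : ℕ) : ℂ))⁻¹ • SD) := by
      abel
    rw [hre, ← sub_smul, hc2]

lemma P18.Gmat_sum_diag {m : ℕ} (hm : m ≠ 0) {SM SD : Matrix (A × B) (A × B) ℂ} :
    ∑ x : Fin 1 → Fin m, P18.Gmat m SM SD x x = SM := by
  have : ∀ x : Fin 1 → Fin m, P18.Gmat m SM SD x x = ((m : ℕ) : ℂ)⁻¹ • SM := by
    intro x
    unfold P18.Gmat
    rw [if_pos rfl]
  rw [Finset.sum_congr rfl fun x _ => this x, Finset.sum_const, Finset.card_univ, P18.cardT,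
    ← Nat.cast_smul_eq_nsmul ℂ m, smul_smul, mul_inv_cancel₀ (Nat.cast_ne_zero.mpr hm), one_smul]

lemma P18.Gmat_trB {m : ℕ} (hm : m ≠ 0) {SM SD : Matrix (A × B) (A × B) ℂ}
    (htrSM : ∀ a a' : A, (∑ b : B, SM (a,b) (a',b)) = if a = a' then 1 else 0)
    (htrSD : ∀ a a' : A, (∑ b : B, SD (a,b) (a',b)) = (((m : ℕ) : ℂ) - 1) * if a = a' then 1 else 0)
    (x y : Fin 1 → Fin m) (a a' : A) :
    (∑ b : B, P18.Gmat m SM SD x y (a,b) (a',b)) = ((m : ℕ) : ℂ)⁻¹ * if a = a' then 1 else 0 := by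
  unfold P18.Gmat
  by_cases h : x = y
  · rw [if_pos h]
    simp only [Matrix.smul_apply, smul_eq_mul]
    rw [← Finset.mul_sum, htrSM]
  · rw [if_neg h]
    simp only [Matrix.smul_apply, smul_eq_mul]
    rw [← Finset.mul_sum, htrSD]
    have hm2 : 1 < m := by
      have : Nontrivial (Fin 1 → Fin m) := ⟨⟨x, y, h⟩⟩
      have := Fintype.one_lt_card_iff_nontrivial.mpr this
      rwa [P18.cardT] at this
    have hmc : ((m : ℕ) : ℂ) ≠ 0 := Nat.cast_ne_zero.mpr (by omega)
    have hm1' : ((m : ℕ) : ℂ) ≠ 1 := by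
      intro hc
      have : m = 1 := by exact_mod_cast hc
      omega
    have hcast : ((m - 1 : ℕ) : ℂ) = ((m : ℕ) : ℂ) - 1 := by
      rw [Nat.cast_sub (by omega), Nat.cast_one]
    rw [hcast, ← mul_assoc]
    congr 1
    have hsub : ((m : ℕ) : ℂ) - 1 ≠ 0 := sub_ne_zero.mpr hm1'
    field_simp

end GmatSection
section CanonicalCore

variable {A B : Type} [Fintype A] [DecidableEq A] [Fintype B] [DecidableEq B]

lemma P18.canonical_core (m : ℕ) (hm : m ≠ 0) (SM SD : Matrix (A × B) (A × B) ℂ)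
    (hSMpsd : SM.PosSemidef) (hSDpsd : SD.PosSemidef)
    (htrSM : ∀ a a' : A, (∑ b : B, SM (a,b) (a',b)) = if a = a' then 1 else 0)
    (htrSD : ∀ a a' : A, (∑ b : B, SD (a,b) (a',b))
      = (((m : ℕ) : ℂ) - 1) * if a = a' then 1 else 0)
    (hSDzero : m = 1 → SD = 0)
    (hW : ∀ (a a' : A) (b b' : B), SM (a,b) (a',b') + SD (a,b) (a',b')
        = if a = a' then (Fintype.card A : ℂ)⁻¹ *
            ∑ c : A, (SM (c,b) (c,b') + SD (c,b) (c,b')) else 0) :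
    ∃ J' : Matrix (((∀ _ : Fin 1, Fin m) × (∀ _ : Fin 1, Fin m)) × (A × B))
        (((∀ _ : Fin 1, Fin m) × (∀ _ : Fin 1, Fin m)) × (A × B)) ℂ,
      FreeCond J' ∧ FreeParCond J' ∧
      linkOut J' (JDeltaProd (fun _ : Fin 1 => m)) = SM := by
  have hmC : ((m : ℕ) : ℂ) ≠ 0 := Nat.cast_ne_zero.mpr hm
  set J' : Matrix (((∀ _ : Fin 1, Fin m) × (∀ _ : Fin 1, Fin m)) × (A × B))
      (((∀ _ : Fin 1, Fin m) × (∀ _ : Fin 1, Fin m)) × (A × B)) ℂ :=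
    Matrix.of fun p q => if p.1 = q.1 then P18.Gmat m SM SD p.1.1 p.1.2 p.2 q.2 else 0
    with hJ'def
  -- entries of J'
  have hJ'e : ∀ (x x' y y' : Fin 1 → Fin m) (u v : A × B),
      J' ((x,y),u) ((x',y'),v)
        = if (x,y) = (x',y') then P18.Gmat m SM SD x y u v else 0 := fun _ _ _ _ _ _ => rfl
  -- partial trace over B of J'
  have htrB : trB J' = ((m : ℕ) : ℂ)⁻¹ • (1 : Matrix _ _ ℂ) := by
    ext p q
    show (∑ b : B, J' ((p.1, (p.2, b))) ((q.1, (q.2, b)))) = _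
    have : ∀ b : B, J' ((p.1, (p.2, b))) ((q.1, (q.2, b)))
        = if p.1 = q.1 then P18.Gmat m SM SD p.1.1 p.1.2 (p.2,b) (q.2,b) else 0 :=
      fun b => rfl
    rw [Finset.sum_congr rfl fun b _ => this b]
    rw [P18.smul_one_entry]
    by_cases h : p.1 = q.1
    · simp only [if_pos h]
      rw [P18.Gmat_trB hm htrSM htrSD p.1.1 p.1.2 p.2 q.2]
      congr 1
      by_cases h2 : p.2 = q.2
      · rw [if_pos h2, if_pos (Prod.ext h h2)]
      · rw [if_neg h2, if_neg (fun hc => h2 (congrArg Prod.snd hc))]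
    · simp only [if_neg h, Finset.sum_const_zero]
      rw [if_neg (fun hc => h (congrArg Prod.fst hc)), mul_zero]
  -- sum over x of entries of Gmat
  have esumG : ∀ (y : Fin 1 → Fin m) (u v : A × B),
      (∑ x : Fin 1 → Fin m, P18.Gmat m SM SD x y u v)
        = ((m : ℕ) : ℂ)⁻¹ * (SM u v + SD u v) := by
    intro y u v
    have h := P18.Gmat_sum (SM := SM) hm hSDzero y
    calc ∑ x : Fin 1 → Fin m, P18.Gmat m SM SD x y u v
        = (∑ x : Fin 1 → Fin m, P18.Gmat m SM SD x y) u v := by rw [Matrix.sum_apply]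
      _ = (((m : ℕ) : ℂ)⁻¹ • (SM + SD)) u v := by rw [h]
      _ = ((m : ℕ) : ℂ)⁻¹ * (SM u v + SD u v) := by
          simp [Matrix.smul_apply, Matrix.add_apply]
  -- the NFS property of J'
  have hnfs' : NFS J' := by
    intro y y' a a' b b'
    have hsx : ∀ (u v : A × B),
        (∑ x : Fin 1 → Fin m, J' ((x,y),u) ((x,y'),v))
          = if y = y' then ((m : ℕ) : ℂ)⁻¹ * (SM u v + SD u v) else 0 := by
      intro u v
      have : ∀ x : Fin 1 → Fin m, J' ((x,y),u) ((x,y'),v)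
          = if y = y' then P18.Gmat m SM SD x y u v else 0 := by
        intro x
        rw [hJ'e]
        congr 1
        simp [Prod.ext_iff]
      rw [Finset.sum_congr rfl fun x _ => this x]
      by_cases hy : y = y'
      · simp only [if_pos hy]
        exact esumG y u v
      · simp only [if_neg hy, Finset.sum_const_zero]
    rw [hsx (a,b) (a',b')]
    have hrhs : (∑ x : Fin 1 → Fin m, ∑ c : A, J' ((x,y),(c,b)) ((x,y'),(c,b')))
        = if y = y' then ((m : ℕ) : ℂ)⁻¹ * ∑ c : A, (SM (c,b) (c,b') + SD (c,b) (c,b')) else 0 := by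
      rw [Finset.sum_comm]
      rw [Finset.sum_congr rfl fun c _ => hsx (c,b) (c,b')]
      by_cases hy : y = y'
      · simp only [if_pos hy]
        rw [← Finset.mul_sum]
      · simp only [if_neg hy, Finset.sum_const_zero]
    rw [hrhs, hW a a' b b']
    by_cases hy : y = y' <;> by_cases ha : a = a' <;> simp [hy, ha] <;> ring
  -- PSD
  have hpsd' : J'.PosSemidef := by
    have := P18.psd_blockDiag (W := (∀ _ : Fin 1, Fin m) × (∀ _ : Fin 1, Fin m)) (U := A × B)
      (fun w => P18.Gmat m SM SD w.1 w.2)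
      (fun w => P18.Gmat_psd m hSMpsd hSDpsd w.1 w.2)
    exact this
  -- cardinalities
  have hcardX : (Fintype.card (∀ _ : Fin 1, Fin m) : ℂ) = ((m : ℕ) : ℂ) := by
    rw [P18.cardT]
  refine ⟨J', ⟨hpsd', ?_, hnfs'⟩, ⟨hpsd', ?_, ?_, hnfs'⟩, ?_⟩
  · -- LNS (trB J') = (card X)⁻¹ • 1
    rw [htrB, hcardX]
    have hLNS1 : ∀ Q : Matrix (((∀ _ : Fin 1, Fin m) × (∀ _ : Fin 1, Fin m)) × A)
        (((∀ _ : Fin 1, Fin m) × (∀ _ : Fin 1, Fin m)) × A) ℂ,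
        LNS Q = Q - floorY 0 Q + floorXY 0 Q := fun Q => rfl
    rw [hLNS1, P18.floorY_one hm, P18.floorXY_one hm, sub_self, zero_add]
  · -- trB J' = floorYall (trB J')
    rw [htrB]
    exact (P18.floorYall_one hm _).symm
  · -- normalization
    ext a a'
    show (∑ w : (∀ _ : Fin 1, Fin m) × (∀ _ : Fin 1, Fin m), ∑ b : B,
        J' (w,(a,b)) (w,(a',b))) = _
    have hterm : ∀ w : (∀ _ : Fin 1, Fin m) × (∀ _ : Fin 1, Fin m),
        (∑ b : B, J' (w,(a,b)) (w,(a',b))) = ((m : ℕ) : ℂ)⁻¹ * if a = a' then 1 else 0 := by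
      intro w
      have : ∀ b, J' (w,(a,b)) (w,(a',b)) = P18.Gmat m SM SD w.1 w.2 (a,b) (a',b) := by
        intro b
        show (if w = w then _ else 0) = _
        rw [if_pos rfl]
      rw [Finset.sum_congr rfl fun b _ => this b]
      exact P18.Gmat_trB hm htrSM htrSD w.1 w.2 a a'
    rw [Finset.sum_congr rfl fun w _ => hterm w, Finset.sum_const, Finset.card_univ,
      nsmul_eq_mul, P18.smul_one_entry, Fintype.card_prod, P18.cardT]
    push_cast
    by_cases h : a = a' <;> field_simp [h]
  · -- the simulated channel
    rw [P18.linkOut_delta (mv := fun _ : Fin 1 => m) J']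
    ext u v
    simp only [Matrix.of_apply]
    rw [P18.sum_diag_collapse (fun w => J' (w,u) (w,v))]
    have : ∀ x : Fin 1 → Fin m, J' ((x,x),u) ((x,x),v) = P18.Gmat m SM SD x x u v := by
      intro x
      show (if ((x,x) : (Fin 1 → Fin m) × (Fin 1 → Fin m)) = (x,x) then _ else 0) = _
      rw [if_pos rfl]
    rw [Finset.sum_congr rfl fun x _ => this x]
    calc ∑ x : Fin 1 → Fin m, P18.Gmat m SM SD x x u v
        = (∑ x : Fin 1 → Fin m, P18.Gmat m SM SD x x) u v := by rw [Matrix.sum_apply]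
      _ = SM u v := by rw [P18.Gmat_sum_diag hm]

end CanonicalCore
section Canonicalize

variable {A B : Type} [Fintype A] [DecidableEq A] [Fintype B] [DecidableEq B]
variable {n : ℕ} {mv : Fin n → ℕ}

lemma P18.canonicalize (hmv : ∀ j, 1 ≤ mv j)
    (J : Matrix (((∀ j, Fin (mv j)) × (∀ j, Fin (mv j))) × (A × B))
         (((∀ j, Fin (mv j)) × (∀ j, Fin (mv j))) × (A × B)) ℂ)
    (hpsd : J.PosSemidef) (hnfs : NFS J)
    (hall : ∀ a a' : A, (∑ w : (∀ j, Fin (mv j)) × (∀ j, Fin (mv j)), ∑ b : B,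
        J (w,(a,b)) (w,(a',b))) = ((∏ j, mv j : ℕ) : ℂ) * (if a = a' then 1 else 0))
    (hmatch : ∀ a a' : A, (∑ x : ∀ j, Fin (mv j), ∑ b : B,
        J ((x,x),(a,b)) ((x,x),(a',b))) = (if a = a' then 1 else 0)) :
    ∃ J' : Matrix (((∀ _ : Fin 1, Fin (∏ j, mv j)) × (∀ _ : Fin 1, Fin (∏ j, mv j))) × (A × B))
        (((∀ _ : Fin 1, Fin (∏ j, mv j)) × (∀ _ : Fin 1, Fin (∏ j, mv j))) × (A × B)) ℂ,
      FreeCond J' ∧ FreeParCond J' ∧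
      linkOut J' (JDeltaProd (fun _ : Fin 1 => ∏ j, mv j)) = linkOut J (JDeltaProd mv) := by
  have hmpos : 0 < ∏ j, mv j := Finset.prod_pos (fun j _ => hmv j)
  set m : ℕ := ∏ j, mv j with hmdef
  set SM : Matrix (A × B) (A × B) ℂ :=
    Matrix.of fun u v => ∑ w : (∀ j, Fin (mv j)) × (∀ j, Fin (mv j)),
      if w.1 = w.2 then J (w,u) (w,v) else 0 with hSMdef
  set SD : Matrix (A × B) (A × B) ℂ :=
    Matrix.of fun u v => ∑ w : (∀ j, Fin (mv j)) × (∀ j, Fin (mv j)),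
      if w.1 = w.2 then 0 else J (w,u) (w,v) with hSDdef
  have hSMpsd : SM.PosSemidef := P18.psd_ite_sum J hpsd (fun w => w.1 = w.2)
  have hSDpsd : SD.PosSemidef := by
    have hrw : SD = Matrix.of fun u v => ∑ w : (∀ j, Fin (mv j)) × (∀ j, Fin (mv j)),
        if ¬ (w.1 = w.2) then J (w,u) (w,v) else 0 := by
      ext u v
      simp only [hSDdef, Matrix.of_apply]
      exact Finset.sum_congr rfl fun w _ => (ite_not _ _ _).symm
    rw [hrw]
    exact P18.psd_ite_sum J hpsd (fun w => ¬ (w.1 = w.2))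
  have htrSM : ∀ a a' : A, (∑ b : B, SM (a,b) (a',b)) = if a = a' then 1 else 0 := by
    intro a a'
    show (∑ b : B, ∑ w : (∀ j, Fin (mv j)) × (∀ j, Fin (mv j)),
      if w.1 = w.2 then J (w,(a,b)) (w,(a',b)) else 0) = _
    rw [Finset.sum_comm]
    have : ∀ w : (∀ j, Fin (mv j)) × (∀ j, Fin (mv j)),
        (∑ b : B, if w.1 = w.2 then J (w,(a,b)) (w,(a',b)) else 0)
        = if w.1 = w.2 then ∑ b : B, J (w,(a,b)) (w,(a',b)) else 0 := by
      intro w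
      split <;> simp
    rw [Finset.sum_congr rfl fun w _ => this w,
      P18.sum_diag_collapse (fun w => ∑ b : B, J (w,(a,b)) (w,(a',b)))]
    exact hmatch a a'
  have htrW : ∀ a a' : A, (∑ w : (∀ j, Fin (mv j)) × (∀ j, Fin (mv j)), ∑ b : B,
      J (w,(a,b)) (w,(a',b))) = ((m : ℕ) : ℂ) * (if a = a' then 1 else 0) := hall
  have htrSD : ∀ a a' : A, (∑ b : B, SD (a,b) (a',b))
      = (((m : ℕ) : ℂ) - 1) * if a = a' then 1 else 0 := by
    intro a a'
    show (∑ b : B, ∑ w : (∀ j, Fin (mv j)) × (∀ j, Fin (mv j)),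
      if w.1 = w.2 then 0 else J (w,(a,b)) (w,(a',b))) = _
    have hsplit : ∀ (b : B) (w : (∀ j, Fin (mv j)) × (∀ j, Fin (mv j))),
        (if w.1 = w.2 then 0 else J (w,(a,b)) (w,(a',b)))
        = J (w,(a,b)) (w,(a',b)) - (if w.1 = w.2 then J (w,(a,b)) (w,(a',b)) else 0) := by
      intro b w
      split <;> ring
    calc (∑ b : B, ∑ w : (∀ j, Fin (mv j)) × (∀ j, Fin (mv j)),
        if w.1 = w.2 then 0 else J (w,(a,b)) (w,(a',b)))
        = (∑ b : B, ∑ w : (∀ j, Fin (mv j)) × (∀ j, Fin (mv j)), J (w,(a,b)) (w,(a',b)))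
          - (∑ b : B, ∑ w : (∀ j, Fin (mv j)) × (∀ j, Fin (mv j)),
              if w.1 = w.2 then J (w,(a,b)) (w,(a',b)) else 0) := by
          rw [← Finset.sum_sub_distrib]
          refine Finset.sum_congr rfl fun b _ => ?_
          rw [← Finset.sum_sub_distrib]
          exact Finset.sum_congr rfl fun w _ => hsplit b w
      _ = (((m : ℕ) : ℂ) - 1) * if a = a' then 1 else 0 := by
          rw [Finset.sum_comm, hall a a']
          have : (∑ b : B, ∑ w : (∀ j, Fin (mv j)) × (∀ j, Fin (mv j)),
              if w.1 = w.2 then J (w,(a,b)) (w,(a',b)) else 0)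
              = if a = a' then 1 else 0 := htrSM a a'
          rw [this]
          ring
  have hSDzero : m = 1 → SD = 0 := by
    intro hm1
    have hsub : Subsingleton (∀ j, Fin (mv j)) := by
      apply Fintype.card_le_one_iff_subsingleton.mp
      rw [P18.card_X, ← hmdef, hm1]
    have : ∀ w : (∀ j, Fin (mv j)) × (∀ j, Fin (mv j)), w.1 = w.2 :=
      fun w => @Subsingleton.elim _ hsub w.1 w.2
    ext u v
    simp only [hSDdef, Matrix.of_apply, Matrix.zero_apply]
    exact Finset.sum_eq_zero fun w _ => by rw [if_pos (this w)]
  have hWsum : ∀ u v : A × B, SM u v + SD u v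
      = ∑ w : (∀ j, Fin (mv j)) × (∀ j, Fin (mv j)), J (w,u) (w,v) := by
    intro u v
    show (∑ w : (∀ j, Fin (mv j)) × (∀ j, Fin (mv j)), if w.1 = w.2 then J (w,u) (w,v) else 0)
      + (∑ w : (∀ j, Fin (mv j)) × (∀ j, Fin (mv j)), if w.1 = w.2 then 0 else J (w,u) (w,v)) = _
    rw [← Finset.sum_add_distrib]
    refine Finset.sum_congr rfl fun w _ => ?_
    split <;> ring
  have hWM : ∀ (a a' : A) (b b' : B),
      (∑ w : (∀ j, Fin (mv j)) × (∀ j, Fin (mv j)), J (w,(a,b)) (w,(a',b')))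
      = if a = a' then (Fintype.card A : ℂ)⁻¹ *
          ∑ c : A, ∑ w : (∀ j, Fin (mv j)) × (∀ j, Fin (mv j)), J (w,(c,b)) (w,(c,b')) else 0 := by
    intro a a' b b'
    have hswap : ∀ (u v : A × B),
        (∑ w : (∀ j, Fin (mv j)) × (∀ j, Fin (mv j)), J (w,u) (w,v))
        = ∑ y : ∀ j, Fin (mv j), ∑ x : ∀ j, Fin (mv j), J ((x,y),u) ((x,y),v) := by
      intro u v
      rw [Fintype.sum_prod_type, Finset.sum_comm]
    rw [hswap (a,b) (a',b')]
    rw [Finset.sum_congr rfl fun y (_ : y ∈ Finset.univ) => hnfs y y a a' b b']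
    by_cases ha : a = a'
    · simp only [if_pos ha]
      rw [← Finset.mul_sum]
      congr 1
      calc ∑ y : ∀ j, Fin (mv j), ∑ x : ∀ j, Fin (mv j), ∑ c : A,
            J ((x,y),(c,b)) ((x,y),(c,b'))
          = ∑ y : ∀ j, Fin (mv j), ∑ c : A, ∑ x : ∀ j, Fin (mv j),
            J ((x,y),(c,b)) ((x,y),(c,b')) :=
            Finset.sum_congr rfl fun y _ => Finset.sum_comm
        _ = ∑ c : A, ∑ y : ∀ j, Fin (mv j), ∑ x : ∀ j, Fin (mv j),
            J ((x,y),(c,b)) ((x,y),(c,b')) := Finset.sum_comm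
        _ = ∑ c : A, ∑ w : (∀ j, Fin (mv j)) × (∀ j, Fin (mv j)),
            J (w,(c,b)) (w,(c,b')) :=
            Finset.sum_congr rfl fun c _ => (hswap (c,b) (c,b')).symm
    · simp only [if_neg ha, Finset.sum_const_zero]
  have hW : ∀ (a a' : A) (b b' : B), SM (a,b) (a',b') + SD (a,b) (a',b')
      = if a = a' then (Fintype.card A : ℂ)⁻¹ *
          ∑ c : A, (SM (c,b) (c,b') + SD (c,b) (c,b')) else 0 := by
    intro a a' b b'
    rw [hWsum (a,b) (a',b'), hWM a a' b b']
    congr 1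
    · congr 1
      exact Finset.sum_congr rfl fun c _ => (hWsum (c,b) (c,b')).symm
  obtain ⟨J', hfree, hpar, hlink⟩ := P18.canonical_core m hmpos.ne' SM SD hSMpsd hSDpsd
    htrSM htrSD hSDzero hW
  refine ⟨J', hfree, hpar, ?_⟩
  rw [hlink, P18.linkOut_delta J]
end Canonicalize
theorem simulation_cost_free_eq_freePar
    {A B : Type} [Fintype A] [DecidableEq A] [Fintype B] [DecidableEq B]
    (JC : Matrix (A × B) (A × B) ℂ) (hCpsd : JC.PosSemidef)
    (hCtp : ∀ a a' : A, (∑ b : B, JC (a, b) (a', b)) = if a = a' then 1 else 0)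
    (ε : ℝ) (hε : 0 ≤ ε) :
    Real.logb 2
      (sInf { r : ℝ | ∃ (n : ℕ) (mv : Fin n → ℕ), (∀ j, 1 ≤ mv j) ∧
        (∃ J : Matrix (((∀ j, Fin (mv j)) × (∀ j, Fin (mv j))) × (A × B))
              (((∀ j, Fin (mv j)) × (∀ j, Fin (mv j))) × (A × B)) ℂ,
          FreeCond J ∧ dDist (linkOut J (JDeltaProd mv)) JC ≤ ε) ∧
        r = ((∏ j, mv j : ℕ) : ℝ) })
    =
    Real.logb 2
      (sInf { r : ℝ | ∃ (n : ℕ) (mv : Fin n → ℕ), (∀ j, 1 ≤ mv j) ∧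
        (∃ J : Matrix (((∀ j, Fin (mv j)) × (∀ j, Fin (mv j))) × (A × B))
              (((∀ j, Fin (mv j)) × (∀ j, Fin (mv j))) × (A × B)) ℂ,
          FreeParCond J ∧ dDist (linkOut J (JDeltaProd mv)) JC ≤ ε) ∧
        r = ((∏ j, mv j : ℕ) : ℝ) }) := by
  have hsets : { r : ℝ | ∃ (n : ℕ) (mv : Fin n → ℕ), (∀ j, 1 ≤ mv j) ∧
        (∃ J : Matrix (((∀ j, Fin (mv j)) × (∀ j, Fin (mv j))) × (A × B))
              (((∀ j, Fin (mv j)) × (∀ j, Fin (mv j))) × (A × B)) ℂ,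
          FreeCond J ∧ dDist (linkOut J (JDeltaProd mv)) JC ≤ ε) ∧
        r = ((∏ j, mv j : ℕ) : ℝ) }
      = { r : ℝ | ∃ (n : ℕ) (mv : Fin n → ℕ), (∀ j, 1 ≤ mv j) ∧
        (∃ J : Matrix (((∀ j, Fin (mv j)) × (∀ j, Fin (mv j))) × (A × B))
              (((∀ j, Fin (mv j)) × (∀ j, Fin (mv j))) × (A × B)) ℂ,
          FreeParCond J ∧ dDist (linkOut J (JDeltaProd mv)) JC ≤ ε) ∧
        r = ((∏ j, mv j : ℕ) : ℝ) } := by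
    ext r
    simp only [Set.mem_setOf_eq]
    constructor
    · rintro ⟨n, mv, hmv, ⟨J, hJ, hdist⟩, rfl⟩
      obtain ⟨hpsd, hL, hnfs⟩ := hJ
      obtain ⟨hall, hmatch⟩ := P18.free_diag hmv J hL
      obtain ⟨J', hfree, hpar, hlink⟩ := P18.canonicalize hmv J hpsd hnfs hall hmatch
      refine ⟨1, fun _ => ∏ j, mv j, fun _ => Finset.one_le_prod' (fun j _ => hmv j),
        ⟨J', hpar, ?_⟩, ?_⟩
      · rw [hlink]
        exact hdist
      · congr 1
        exact (Fin.prod_univ_one (fun _ : Fin 1 => ∏ j, mv j)).symm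
    · rintro ⟨n, mv, hmv, ⟨J, hJ, hdist⟩, rfl⟩
      obtain ⟨hpsd, hb, hc, hnfs⟩ := hJ
      obtain ⟨hall, hmatch⟩ := P18.freePar_diag hmv J hb hc
      obtain ⟨J', hfree, hpar, hlink⟩ := P18.canonicalize hmv J hpsd hnfs hall hmatch
      refine ⟨1, fun _ => ∏ j, mv j, fun _ => Finset.one_le_prod' (fun j _ => hmv j),
        ⟨J', hfree, ?_⟩, ?_⟩
      · rw [hlink]
        exact hdist
      · congr 1
        exact (Fin.prod_univ_one (fun _ : Fin 1 => ∏ j, mv j)).symm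
  rw [hsets]

end ICO
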